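/- Let T ∈ ℝ, let a, b, σ be positive real constants, let g : (−∞,T] → ℝ be a continuous function with g(t) ≥ 0 for all t ≤ T, and let ψ ≥ 0. Then there exists a unique differentiable function φ : (−∞,T] → ℝ such that φ(T) = ψ and φ′(t) = (σ²/2)·φ(t)² + a·φ(t) − (1 + b·g(t)) for all t ≤ T; moreover this solution satisfies φ(t) > 0 for every t < T. -/

import Mathlib

open Set Topology Filter

lemma push_lemma {φ d : ℝ → ℝ} {t₀ T K : ℝ} (hle : t₀ ≤ T)
    (hφ : ContinuousOn φ (Icc t₀ T))
    (hd : ∀ x ∈ Ico t₀ T, HasDerivWithinAt φ (d x) (Ici x) x)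
    (hgrow : ∀ x ∈ Ico t₀ T, K ≤ φ x → 1 ≤ d x)
    (h0 : K ≤ φ t₀) : K + (T - t₀) / 2 ≤ φ T := by
  have key := image_le_of_deriv_right_lt_deriv_boundary'
    (f := fun u => K + (u - t₀) / 2) (f' := fun _ => 1 / 2) (B := φ) (B' := d)
    (a := t₀) (b := T)
    (by fun_prop)
    (fun x _ => (((hasDerivWithinAt_id x (Ici x)).sub_const t₀).div_const 2).const_add K)
    (by simpa using h0) hφ hd ?_
  · simpa using key (right_mem_Icc.mpr hle)
  · intro x hx heq
    have h1 : K ≤ φ x := by rw [← heq]; simp; linarith [hx.1]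
    linarith [hgrow x hx h1]

lemma riccati_exists_Icc (T a b σ ψ : ℝ) (ha : 0 < a) (hb : 0 < b) (hσ : 0 < σ)
    (hψ : 0 ≤ ψ) (g : ℝ → ℝ) (hg_cont : ContinuousOn g (Set.Iic T))
    (hg_nonneg : ∀ t ≤ T, 0 ≤ g t) (s : ℝ) (hs : s ≤ T) :
    ∃ f : ℝ → ℝ, f T = ψ ∧
      (∀ t ∈ Icc s T, HasDerivWithinAt f
        (σ ^ 2 / 2 * (f t) ^ 2 + a * f t - (1 + b * g t)) (Icc s T) t) ∧
      (∀ t ∈ Ico s T, 0 < f t) := by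
  have hσ2 : (0:ℝ) ≤ σ ^ 2 := sq_nonneg σ
  -- a bound for g on [s, T]
  obtain ⟨Γ, hΓ0, hΓ⟩ : ∃ Γ : ℝ, 0 ≤ Γ ∧ ∀ t ∈ Icc s T, |g t| ≤ Γ := by
    obtain ⟨Γ₀, hΓ₀⟩ := isCompact_Icc.exists_bound_of_continuousOn
      (hg_cont.mono (Icc_subset_Iic_self (a := s)))
    exact ⟨|Γ₀|, abs_nonneg _, fun t ht => (hΓ₀ t ht).trans (le_abs_self _)⟩
  -- the upper barrier level
  obtain ⟨M, hM0, hMψ, hMa⟩ : ∃ M : ℝ, 0 ≤ M ∧ ψ ≤ M ∧ 2 + b * Γ ≤ a * M := by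
    refine ⟨max ψ ((2 + b * Γ) / a), le_trans hψ (le_max_left _ _), le_max_left _ _, ?_⟩
    have h := le_max_right ψ ((2 + b * Γ) / a)
    rw [div_le_iff₀ ha] at h; linarith
  -- the clamping function
  obtain ⟨c, hc1, hc2, hcl, hcM, hc0', hcid⟩ :
      ∃ c : ℝ → ℝ, (∀ x, 0 ≤ c x) ∧ (∀ x, c x ≤ M) ∧
        (∀ x y, |c x - c y| ≤ |x - y|) ∧ (∀ x, M ≤ x → c x = M) ∧
        (∀ x, x ≤ 0 → c x = 0) ∧ (∀ x, 0 ≤ x → x ≤ M → c x = x) := by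
    refine ⟨fun x => max 0 (min x M), fun x => le_max_left _ _,
      fun x => max_le hM0 (min_le_right _ _), ?_, ?_, ?_, ?_⟩
    · intro x y
      calc |max 0 (min x M) - max 0 (min y M)|
          = |max (min x M) 0 - max (min y M) 0| := by rw [max_comm, max_comm (min y M)]
      _ ≤ |min x M - min y M| := abs_max_sub_max_le_abs _ _ _
      _ ≤ max |x - y| |M - M| := abs_min_sub_min_le_max _ _ _ _
      _ = |x - y| := by simp
    · intro x hx; show max 0 (min x M) = M; rw [min_eq_right hx, max_eq_right hM0]
    · intro x hx; show max 0 (min x M) = 0; exact max_eq_left ((min_le_left _ _).trans hx)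
    · intro x h1 h2; show max 0 (min x M) = x; rw [min_eq_left h2, max_eq_right h1]
  -- the truncated vector field
  obtain ⟨F, hF⟩ : ∃ F : ℝ → ℝ → ℝ,
      ∀ t x, F t x = σ ^ 2 / 2 * (c x) ^ 2 + a * c x - (1 + b * g t) :=
    ⟨_, fun _ _ => rfl⟩
  obtain ⟨C, hC0, hbound, hClo⟩ : ∃ C : ℝ, 0 ≤ C ∧
      (∀ t ∈ Icc s T, ∀ x : ℝ, |F t x| ≤ C) ∧
      σ ^ 2 / 2 * M ^ 2 + a * M + 1 + b * Γ ≤ C := by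
    refine ⟨σ ^ 2 / 2 * M ^ 2 + a * M + 1 + b * Γ, ?_, ?_, le_refl _⟩
    · nlinarith [mul_nonneg ha.le hM0, mul_nonneg hb.le hΓ0, sq_nonneg M]
    · intro t ht x
      have h1 := hc1 x; have h2 := hc2 x
      have h3 := abs_le.mp (hΓ t ht)
      have hcx2 : (c x) ^ 2 ≤ M ^ 2 := by nlinarith
      have hcx0 : 0 ≤ (c x) ^ 2 := sq_nonneg _
      rw [hF, abs_le]
      constructor <;> nlinarith [mul_le_mul_of_nonneg_left h3.2 hb.le,
        mul_le_mul_of_nonneg_left h3.1 hb.le, mul_nonneg ha.le h1,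
        mul_le_mul_of_nonneg_left h2 ha.le, mul_le_mul_of_nonneg_left hcx2 hσ2]
  obtain ⟨L, hLcoe⟩ : ∃ L : NNReal, (L : ℝ) = σ ^ 2 * M + a :=
    ⟨(σ ^ 2 * M + a).toNNReal, Real.coe_toNNReal _ (by nlinarith)⟩
  obtain ⟨Cn, hCn⟩ : ∃ Cn : NNReal, (Cn : ℝ) = C := ⟨C.toNNReal, Real.coe_toNNReal _ hC0⟩
  obtain ⟨A, hA⟩ : ∃ A : NNReal, (A : ℝ) = C * (T - s) :=
    ⟨(C * (T - s)).toNNReal, Real.coe_toNNReal _ (mul_nonneg hC0 (by linarith))⟩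
  have hpl : IsPicardLindelof F (⟨T, right_mem_Icc.mpr hs⟩ : Icc s T) ψ A 0 Cn L := by
    refine ⟨?_, ?_, ?_, ?_⟩
    · intro t _
      rw [lipschitzOnWith_iff_dist_le_mul]
      intro x _ y _
      simp only [Real.dist_eq, hLcoe]
      have key : F t x - F t y = (σ ^ 2 / 2 * (c x + c y) + a) * (c x - c y) := by
        rw [hF, hF]; ring
      rw [key, abs_mul]
      have h1 : |σ ^ 2 / 2 * (c x + c y) + a| ≤ σ ^ 2 * M + a := by
        rw [abs_of_nonneg (by nlinarith [hc1 x, hc1 y])]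
        nlinarith [hc2 x, hc2 y, hc1 x, hc1 y]
      calc |σ ^ 2 / 2 * (c x + c y) + a| * |c x - c y|
          ≤ (σ ^ 2 * M + a) * |c x - c y| :=
            mul_le_mul_of_nonneg_right h1 (abs_nonneg _)
      _ ≤ (σ ^ 2 * M + a) * |x - y| :=
            mul_le_mul_of_nonneg_left (hcl x y) (by nlinarith)
    · intro x _
      have : (fun t => F t x) = fun t => σ ^ 2 / 2 * (c x) ^ 2 + a * c x - (1 + b * g t) := by
        funext t; exact hF t x
      rw [this]
      exact continuousOn_const.sub (continuousOn_const.add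
        (continuousOn_const.mul (hg_cont.mono Icc_subset_Iic_self)))
    · intro t ht x _
      rw [Real.norm_eq_abs, hCn]; exact hbound t ht x
    · show (Cn:ℝ) * max (T - T) (T - s) ≤ (A:ℝ) - ((0:NNReal):ℝ)
      rw [hCn, hA, NNReal.coe_zero, sub_zero, sub_self, max_eq_right (by linarith : (0:ℝ) ≤ T - s)]
  obtain ⟨f, hfT, hf'⟩ := hpl.exists_eq_forall_mem_Icc_hasDerivWithinAt₀
  replace hfT : f T = ψ := hfT
  have hfc : ContinuousOn f (Icc s T) := fun t ht => (hf' t ht).continuousWithinAt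
  have hIci : ∀ x ∈ Ico s T, HasDerivWithinAt f (F x (f x)) (Ici x) x := by
    intro x hx
    refine (hf' x (Ico_subset_Icc_self hx)).mono_of_mem_nhdsWithin ?_
    rw [mem_nhdsWithin]
    exact ⟨Iio T, isOpen_Iio, hx.2, fun u hu => ⟨hx.1.trans hu.2, hu.1.le⟩⟩
  have hub : ∀ t ∈ Icc s T, f t ≤ M := by
    intro t ht
    by_contra hgt
    push_neg at hgt
    have key := push_lemma (φ := f) (d := fun x => F x (f x)) (K := M) ht.2
      (hfc.mono (Icc_subset_Icc_left ht.1))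
      (fun x hx => hIci x ⟨ht.1.trans hx.1, hx.2⟩) ?_ hgt.le
    · have hTt : t = T := le_antisymm ht.2 (by rw [hfT] at key; linarith)
      rw [hTt, hfT] at hgt; linarith
    · intro x hx hMfx
      have hgx : g x ≤ Γ := (abs_le.mp (hΓ x ⟨ht.1.trans hx.1, hx.2.le⟩)).2
      show 1 ≤ F x (f x)
      rw [hF, hcM _ hMfx]
      nlinarith [mul_le_mul_of_nonneg_left hgx hb.le]
  have hlbT : ∀ t ∈ Icc s T, f t ≤ 0 → t = T := by
    intro t ht hneg
    have key := push_lemma (φ := fun u => -f u) (d := fun x => -(F x (f x))) (K := 0)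
      ht.2 (hfc.neg.mono (Icc_subset_Icc_left ht.1))
      (fun x hx => (hIci x ⟨ht.1.trans hx.1, hx.2⟩).neg) ?_ (by simpa using hneg)
    · exact le_antisymm ht.2 (by simp only [hfT] at key; linarith)
    · intro x hx hfx
      simp only [neg_nonneg] at hfx
      have hgx : 0 ≤ g x := hg_nonneg x hx.2.le
      show 1 ≤ -F x (f x)
      rw [hF, hc0' _ hfx]
      nlinarith [mul_le_mul_of_nonneg_left hgx hb.le]
  have hpos : ∀ t ∈ Ico s T, 0 < f t := by
    intro t ht
    by_contra hneg
    push_neg at hneg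
    exact absurd (hlbT t (Ico_subset_Icc_self ht) hneg) ht.2.ne
  have hnn : ∀ t ∈ Icc s T, 0 ≤ f t := by
    intro t ht
    rcases eq_or_lt_of_le ht.2 with h | h
    · rw [h, hfT]; exact hψ
    · exact (hpos t ⟨ht.1, h⟩).le
  refine ⟨f, hfT, ?_, hpos⟩
  intro t ht
  have := hf' t ht
  rwa [hF, hcid _ (hnn t ht) (hub t ht)] at this

lemma riccati_eqOn {a b σ : ℝ} (ha : 0 < a) (hσ : 0 < σ) (g : ℝ → ℝ) {s T : ℝ} (hs : s ≤ T) {f h : ℝ → ℝ}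
    (hf_cont : ContinuousOn f (Icc s T))
    (hf' : ∀ t ∈ Ioc s T, HasDerivWithinAt f
      (σ ^ 2 / 2 * (f t) ^ 2 + a * f t - (1 + b * g t)) (Iic t) t)
    (hh_cont : ContinuousOn h (Icc s T))
    (hh' : ∀ t ∈ Ioc s T, HasDerivWithinAt h
      (σ ^ 2 / 2 * (h t) ^ 2 + a * h t - (1 + b * g t)) (Iic t) t)
    (hend : f T = h T) : EqOn f h (Icc s T) := by
  obtain ⟨r₁, hr₁⟩ := (isCompact_Icc (a := s) (b := T)).exists_bound_of_continuousOn hf_cont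
  obtain ⟨r₂, hr₂⟩ := (isCompact_Icc (a := s) (b := T)).exists_bound_of_continuousOn hh_cont
  set r : ℝ := |r₁| + |r₂| with hr
  have hr0 : 0 ≤ r := by positivity
  have hfr : ∀ t ∈ Icc s T, f t ∈ Metric.closedBall (0 : ℝ) r := by
    intro t ht
    simp only [Metric.mem_closedBall, Real.dist_eq, sub_zero]
    calc |f t| = ‖f t‖ := rfl
    _ ≤ r₁ := hr₁ t ht
    _ ≤ r := by rw [hr]; cases abs_cases r₁ <;> cases abs_cases r₂ <;> linarith
  have hhr : ∀ t ∈ Icc s T, h t ∈ Metric.closedBall (0 : ℝ) r := by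
    intro t ht
    simp only [Metric.mem_closedBall, Real.dist_eq, sub_zero]
    calc |h t| = ‖h t‖ := rfl
    _ ≤ r₂ := hr₂ t ht
    _ ≤ r := by rw [hr]; cases abs_cases r₁ <;> cases abs_cases r₂ <;> linarith
  have hv : ∀ t : ℝ, LipschitzOnWith (σ ^ 2 * r + a).toNNReal
      (fun x : ℝ => σ ^ 2 / 2 * x ^ 2 + a * x - (1 + b * g t))
      (Metric.closedBall (0 : ℝ) r) := by
    intro t
    rw [lipschitzOnWith_iff_dist_le_mul]
    intro x hx y hy
    simp only [Metric.mem_closedBall, Real.dist_eq, sub_zero] at hx hy ⊢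
    have habs : 0 ≤ σ ^ 2 * r + a := by nlinarith [sq_nonneg σ, ha.le]
    rw [Real.coe_toNNReal _ habs]
    have : σ ^ 2 / 2 * x ^ 2 + a * x - (1 + b * g t)
        - (σ ^ 2 / 2 * y ^ 2 + a * y - (1 + b * g t))
        = (σ ^ 2 / 2 * (x + y) + a) * (x - y) := by ring
    rw [this, abs_mul]
    have h1 : |σ ^ 2 / 2 * (x + y) + a| ≤ σ ^ 2 * r + a := by
      have := abs_add_le x y
      have hx' := abs_le.mp hx
      have hy' := abs_le.mp hy
      obtain ⟨h2, h3⟩ := abs_le.mp hx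
      obtain ⟨h4, h5⟩ := abs_le.mp hy
      cases abs_cases (σ ^ 2 / 2 * (x + y) + a) with
      | inl hc => rw [hc.1]; nlinarith [sq_nonneg σ, hσ.le]
      | inr hc => rw [hc.1]; nlinarith [sq_nonneg σ, hσ.le]
    exact mul_le_mul_of_nonneg_right h1 (abs_nonneg _)
  intro t ht
  refine ODE_solution_unique_of_mem_Icc_left (fun t _ => hv t) hf_cont
    (fun u hu => (hf' u hu)) (fun u hu => hfr u ⟨hu.1.le, hu.2⟩)
    hh_cont (fun u hu => (hh' u hu)) (fun u hu => hhr u ⟨hu.1.le, hu.2⟩) hend ht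

/-- Existence, uniqueness and positivity of the solution of the Riccati
equation φ′(t) = (σ²/2)·φ(t)² + a·φ(t) − (1 + b·g(t)) on (−∞,T] with final condition
φ(T) = ψ, where a, b, σ > 0, g is continuous and nonnegative on (−∞,T], and ψ ≥ 0. -/
theorem riccati_existence_uniqueness_positivity
    (T a b σ ψ : ℝ) (ha : 0 < a) (hb : 0 < b) (hσ : 0 < σ) (hψ : 0 ≤ ψ)
    (g : ℝ → ℝ) (hg_cont : ContinuousOn g (Set.Iic T))
    (hg_nonneg : ∀ t ≤ T, 0 ≤ g t) :
    ∃ φ : ℝ → ℝ,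
      (φ T = ψ ∧
        ∀ t ≤ T, HasDerivWithinAt φ
          (σ ^ 2 / 2 * (φ t) ^ 2 + a * φ t - (1 + b * g t)) (Set.Iic T) t) ∧
      (∀ t < T, 0 < φ t) ∧
      (∀ ψ' : ℝ → ℝ,
        (ψ' T = ψ ∧
          ∀ t ≤ T, HasDerivWithinAt ψ'
            (σ ^ 2 / 2 * (ψ' t) ^ 2 + a * ψ' t - (1 + b * g t)) (Set.Iic T) t) →
        ∀ t ≤ T, ψ' t = φ t) := by
  choose Φ hΦT hΦ' hΦpos using fun n : ℕ =>
    riccati_exists_Icc T a b σ ψ ha hb hσ hψ g hg_cont hg_nonneg (T - n)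
      (by linarith [Nat.cast_nonneg (α := ℝ) n])
  have hcont : ∀ n : ℕ, ContinuousOn (Φ n) (Icc (T - n) T) :=
    fun n t ht => (hΦ' n t ht).continuousWithinAt
  have hIic : ∀ n : ℕ, ∀ t ∈ Ioc (T - (n:ℝ)) T,
      HasDerivWithinAt (Φ n)
        (σ ^ 2 / 2 * (Φ n t) ^ 2 + a * Φ n t - (1 + b * g t)) (Iic t) t := by
    intro n t ht
    refine (hΦ' n t ⟨ht.1.le, ht.2⟩).mono_of_mem_nhdsWithin ?_
    rw [mem_nhdsWithin]
    exact ⟨Ioi (T - n), isOpen_Ioi, ht.1, fun u hu => ⟨hu.1.le, hu.2.trans ht.2⟩⟩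
  have agree : ∀ m n : ℕ, m ≤ n → EqOn (Φ m) (Φ n) (Icc (T - m) T) := by
    intro m n hmn
    have hmn' : T - (n:ℝ) ≤ T - m := by
      have : (m:ℝ) ≤ n := Nat.cast_le.mpr hmn
      linarith
    refine riccati_eqOn ha hσ g (by linarith [Nat.cast_nonneg (α := ℝ) m] : T - (m:ℝ) ≤ T)
      (hcont m) (fun t ht => hIic m t ht)
      ((hcont n).mono (Icc_subset_Icc_left hmn'))
      (fun t ht => hIic n t ⟨lt_of_le_of_lt hmn' ht.1, ht.2⟩) ?_
    rw [hΦT m, hΦT n]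
  set φ : ℝ → ℝ := fun u => Φ ⌈T - u⌉₊ u with hφdef
  have key : ∀ n : ℕ, ∀ u ∈ Icc (T - (n:ℝ)) T, φ u = Φ n u := by
    intro n u hu
    have hN : T - u ≤ (⌈T - u⌉₊ : ℝ) := Nat.le_ceil _
    have hmem : u ∈ Icc (T - (⌈T - u⌉₊:ℝ)) T := ⟨by linarith, hu.2⟩
    rcases le_total ⌈T - u⌉₊ n with h | h
    · exact agree _ n h hmem
    · exact (agree n _ h hu).symm
  have hφT : φ T = ψ := hΦT _
  have hφd : ∀ t ≤ T, HasDerivWithinAt φ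
      (σ ^ 2 / 2 * (φ t) ^ 2 + a * φ t - (1 + b * g t)) (Iic T) t := by
    intro t ht
    have hn : T - ((⌈T - t⌉₊ + 1 : ℕ):ℝ) < t := by
      push_cast; linarith [Nat.le_ceil (T - t)]
    have hmem : Icc (T - ((⌈T - t⌉₊ + 1 : ℕ):ℝ)) T ∈ 𝓝[Iic T] t := by
      rw [mem_nhdsWithin]
      exact ⟨Ioi _, isOpen_Ioi, hn, fun u hu => ⟨hu.1.le, hu.2⟩⟩
    have hd := (hΦ' (⌈T - t⌉₊ + 1) t ⟨hn.le, ht⟩).mono_of_mem_nhdsWithin hmem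
    have heq : φ t = Φ (⌈T - t⌉₊ + 1) t := key _ t ⟨hn.le, ht⟩
    rw [heq]
    exact hd.congr_of_eventuallyEq
      (Filter.eventually_of_mem hmem (fun u hu => key _ u hu)) heq
  have hφpos : ∀ t < T, 0 < φ t := by
    intro t ht
    have hn : T - ((⌈T - t⌉₊ + 1 : ℕ):ℝ) < t := by
      push_cast; linarith [Nat.le_ceil (T - t)]
    rw [key (⌈T - t⌉₊ + 1) t ⟨hn.le, ht.le⟩]
    exact hΦpos _ t ⟨hn.le, ht⟩
  refine ⟨φ, ⟨hφT, hφd⟩, hφpos, ?_⟩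
  rintro ψ' ⟨hψ'T, hψ'd⟩ t ht
  have hn : T - (⌈T - t⌉₊:ℝ) ≤ t := by linarith [Nat.le_ceil (T - t)]
  have hsle : T - (⌈T - t⌉₊:ℝ) ≤ T := by
    linarith [Nat.cast_nonneg (α := ℝ) ⌈T - t⌉₊]
  refine riccati_eqOn ha hσ g hsle
    (fun u hu => ((hψ'd u hu.2).continuousWithinAt).mono Icc_subset_Iic_self)
    (fun u hu => (hψ'd u hu.2).mono (Iic_subset_Iic.mpr hu.2))
    (fun u hu => ((hφd u hu.2).continuousWithinAt).mono Icc_subset_Iic_self)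
    (fun u hu => (hφd u hu.2).mono (Iic_subset_Iic.mpr hu.2))
    (by rw [hψ'T, hφT]) ⟨hn, ht⟩
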